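/- Let m ∈ ℂ, r > 0, and α0, α1 ∈ ℝ with 0 < α1 − α0 < 2π. Set p_j := m − i·r·exp(i·α_j) for j ∈ {0,1}, d := p1 − p0, and β0 := (α0 − α1)/2, β(t) := β0·(1−2t). Then d = 2r·sin((α1−α0)/2)·exp(i·(α0+α1)/2) ≠ 0, and the curve p(t) := p0 + d·I(β,t)/I(β) satisfies p(t) = m − i·r·exp(i·((1−t)·α0 + t·α1)) for all t ∈ [0,1]; that is, the interpolating construction with the antisymmetric boundary angles (β0, −β0) exactly parametrizes the circular arc on the circle of center m and radius r from p0 to p1. -/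

import Mathlib

open scoped Real

/-- `I(β,t) := ∫₀ᵗ exp(i·β(s)) ds`. -/
noncomputable def Iint (β : ℝ → ℝ) (t : ℝ) : ℂ :=
  ∫ s in (0:ℝ)..t, Complex.exp (Complex.I * (β s : ℂ))

lemma expI_sub_aux (x : ℝ) :
    Complex.exp (Complex.I * (x : ℂ)) - Complex.exp (Complex.I * ((-x : ℝ) : ℂ))
      = 2 * Complex.I * ((Real.sin x : ℝ) : ℂ) := by
  rw [Complex.ofReal_sin, Complex.sin]
  push_cast
  rw [show Complex.I * -(x:ℂ) = -(x:ℂ) * Complex.I by ring,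
      show Complex.I * (x:ℂ) = (x:ℂ) * Complex.I by ring]
  linear_combination (Complex.exp ((x:ℂ)*Complex.I) - Complex.exp (-(x:ℂ)*Complex.I)) * Complex.I_sq

/-- circle reproduction. For Hermite data sampled from the circle of
center `m` and radius `r` at tangent angles `α₀ < α₁ < α₀ + 2π`, the interpolating
construction with the antisymmetric boundary angles `(β₀, −β₀)`, `β₀ = (α₀−α₁)/2`,
exactly parametrizes the circular arc from `p₀` to `p₁`. -/
theorem circle_reproduction
    (m : ℂ) (r : ℝ) (hr : 0 < r) (α0 α1 : ℝ)
    (h01 : 0 < α1 - α0) (h2π : α1 - α0 < 2 * π)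
    (p0 p1 : ℂ)
    (hp0 : p0 = m - Complex.I * (r : ℂ) * Complex.exp (Complex.I * (α0 : ℂ)))
    (hp1 : p1 = m - Complex.I * (r : ℂ) * Complex.exp (Complex.I * (α1 : ℂ)))
    (β : ℝ → ℝ) (hβ : ∀ t, β t = ((α0 - α1) / 2) * (1 - 2 * t))
    (p : ℝ → ℂ) (hp : ∀ t, p t = p0 + (p1 - p0) * Iint β t / Iint β 1) :
    p1 - p0 = ((2 * r * Real.sin ((α1 - α0) / 2) : ℝ) : ℂ)
        * Complex.exp (Complex.I * (((α0 + α1) / 2 : ℝ) : ℂ)) ∧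
    p1 - p0 ≠ 0 ∧
    ∀ t ∈ Set.Icc (0:ℝ) 1,
      p t = m - Complex.I * (r : ℂ)
          * Complex.exp (Complex.I * (((1 - t) * α0 + t * α1 : ℝ) : ℂ)) := by
  set δ : ℝ := (α1 - α0) / 2 with hδdef
  set μ : ℝ := (α0 + α1) / 2 with hμdef
  have hδ0 : 0 < δ := by rw [hδdef]; linarith
  have hδπ : δ < π := by rw [hδdef]; linarith
  have hδne : (δ : ℂ) ≠ 0 := by exact_mod_cast hδ0.ne'
  have hs : 0 < Real.sin δ := Real.sin_pos_of_pos_of_lt_pi hδ0 hδπ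
  have hsne : ((Real.sin δ : ℝ) : ℂ) ≠ 0 := by exact_mod_cast hs.ne'
  set eμ : ℂ := Complex.exp (Complex.I * ((μ : ℝ) : ℂ)) with heμ
  set eδ : ℂ := Complex.exp (Complex.I * ((δ : ℝ) : ℂ)) with heδ
  set enδ : ℂ := Complex.exp (Complex.I * ((-δ : ℝ) : ℂ)) with henδ
  have hsub : eδ - enδ = 2 * Complex.I * ((Real.sin δ : ℝ) : ℂ) := expI_sub_aux δ
  have he1 : Complex.exp (Complex.I * (α1 : ℂ)) = eμ * eδ := by
    rw [heμ, heδ, ← Complex.exp_add]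
    congr 1
    rw [hμdef, hδdef]; push_cast; ring
  have he0 : Complex.exp (Complex.I * (α0 : ℂ)) = eμ * enδ := by
    rw [heμ, henδ, ← Complex.exp_add]
    congr 1
    rw [hμdef, hδdef]; push_cast; ring
  have hd : p1 - p0 = ((2 * r * Real.sin δ : ℝ) : ℂ) * eμ := by
    rw [hp0, hp1, he0, he1, heμ]
    push_cast [← Complex.ofReal_sin]
    linear_combination (-(Complex.I * (r:ℂ) * eμ)) * hsub
      + (-(2 * (r:ℂ) * ((Real.sin δ : ℝ):ℂ) * eμ)) * Complex.I_sq
  have hc : (2 * Complex.I * (δ:ℂ)) ≠ 0 := by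
    simp [Complex.I_ne_zero, hδne]
  have hIint : ∀ t : ℝ, Iint β t
      = enδ * (Complex.exp ((2 * Complex.I * (δ:ℂ)) * (t:ℂ)) - 1) / (2 * Complex.I * (δ:ℂ)) := by
    intro t
    unfold Iint
    have harg : ∀ s : ℝ, Complex.I * ((β s : ℝ) : ℂ)
        = Complex.I * ((-δ : ℝ) : ℂ) + (2 * Complex.I * (δ:ℂ)) * (s : ℂ) := by
      intro s
      rw [hβ, hδdef]; push_cast; ring
    simp_rw [harg, Complex.exp_add]
    rw [intervalIntegral.integral_const_mul, integral_exp_mul_complex hc]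
    rw [henδ]
    simp only [Complex.ofReal_zero, mul_zero, Complex.exp_zero]
    push_cast
    ring
  have hI1 : Iint β 1 = 2 * Complex.I * ((Real.sin δ : ℝ) : ℂ) / (2 * Complex.I * (δ:ℂ)) := by
    rw [hIint 1, ← hsub]
    congr 1
    rw [heδ, henδ, mul_sub, mul_one, ← Complex.exp_add,
      show Complex.I * ((-δ:ℝ):ℂ) + 2 * Complex.I * (δ:ℂ) * ((1:ℝ):ℂ)
        = Complex.I * ((δ:ℝ):ℂ) by push_cast; ring]
  have hE : ∀ t : ℝ, Complex.exp (Complex.I * (((1 - t) * α0 + t * α1 : ℝ) : ℂ))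
      = Complex.exp (Complex.I * (α0:ℂ)) * Complex.exp ((2 * Complex.I * (δ:ℂ)) * (t:ℂ)) := by
    intro t
    rw [← Complex.exp_add]
    congr 1
    rw [hδdef]; push_cast; ring
  have hcast : ((2 * r * Real.sin δ : ℝ) : ℂ)
      = 2 * (r:ℂ) * ((Real.sin δ : ℝ) : ℂ) := by
    push_cast; ring
  have hdne : (2 * r * Real.sin δ : ℝ) ≠ 0 := by
    have h2r : (0:ℝ) < 2 * r := by linarith
    exact (mul_pos h2r hs).ne'
  have hS : Complex.sin ((δ:ℝ):ℂ) ≠ 0 := by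
    rw [← Complex.ofReal_sin]; exact hsne
  have heμne : eμ ≠ 0 := by rw [heμ]; exact Complex.exp_ne_zero _
  clear_value δ μ eμ eδ enδ
  refine ⟨hd, ?_, ?_⟩
  · rw [hd]
    exact mul_ne_zero (Complex.ofReal_ne_zero.mpr hdne) heμne
  · intro t ht
    rw [hp t, hd, hcast, hI1, hIint t, hp0, hE t, he0]
    field_simp [hS]
    linear_combination (2 * (r:ℂ) * Complex.sin ((δ:ℝ):ℂ) * eμ * enδ
      * (Complex.exp (2 * Complex.I * (δ:ℂ) * (t:ℂ)) - 1)
      + (r:ℂ) * eμ * enδ * (-1 + Complex.exp (Complex.I * 2 * (δ:ℂ) * (t:ℂ))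
        + 2 * Complex.sin ((δ:ℝ):ℂ)
        - 2 * Complex.sin ((δ:ℝ):ℂ) * Complex.exp (2 * Complex.I * (δ:ℂ) * (t:ℂ)))) * Complex.I_sq
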